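/- There exists a topological space that is weakly Hausdorff but not KC; that is, a space X in which the continuous image of every compact Hausdorff space is closed, yet some compact subset of X is not closed. -/

import Mathlib

open Set Filter Topology

universe u

/-- A subset `C` of a space `X` is k₁-closed provided for every compact subset `K` of `X`,
the intersection `C ∩ K` is closed in the subspace topology on `K`. -/
def IsK1Closed {X : Type u} [TopologicalSpace X] (C : Set X) : Prop :=
  ∀ K : Set X, IsCompact K → IsClosed ((Subtype.val : K → X) ⁻¹' C)

/-- A space is k₁-Hausdorff provided its diagonal is k₁-closed in its square. -/
def K1Hausdorff (X : Type u) [TopologicalSpace X] : Prop :=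
  IsK1Closed {p : X × X | p.1 = p.2}

/-- A space is KC provided every compact subset is closed. -/
def KCSpace (X : Type u) [TopologicalSpace X] : Prop :=
  ∀ K : Set X, IsCompact K → IsClosed K

/-- A space `X` is weakly Hausdorff provided for every compact Hausdorff space `K` and
continuous `f : K → X`, the image of `f` is closed in `X`. -/
def WeaklyHausdorff (X : Type u) [TopologicalSpace X] : Prop :=
  ∀ (K : Type u) [TopologicalSpace K] [CompactSpace K] [T2Space K]
    (f : K → X), Continuous f → IsClosed (Set.range f)

/-- A subset `C` of `X` is k₂-closed provided for every compact Hausdorff space `K` and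
continuous `f : K → X`, the preimage `f ⁻¹' C` is closed in `K`. -/
def IsK2Closed {X : Type u} [TopologicalSpace X] (C : Set X) : Prop :=
  ∀ (K : Type u) [TopologicalSpace K] [CompactSpace K] [T2Space K]
    (f : K → X), Continuous f → IsClosed (f ⁻¹' C)

/-- A space is k₂-Hausdorff provided its diagonal is k₂-closed in its square. -/
def K2Hausdorff (X : Type u) [TopologicalSpace X] : Prop :=
  IsK2Closed {p : X × X | p.1 = p.2}

/-- A space has unique sequential limits provided every convergent sequence has a unique limit. -/
def UniqueSequentialLimits (X : Type u) [TopologicalSpace X] : Prop :=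
  ∀ (a : ℕ → X) (l₀ l₁ : X),
    Filter.Tendsto a Filter.atTop (nhds l₀) →
    Filter.Tendsto a Filter.atTop (nhds l₁) → l₀ = l₁

section AuxConstruction

open OnePoint

open Set Filter Topology OnePoint

/-- Every compact subset of `OnePoint ℚ` is closed (KC). -/
theorem opcQ_kc {K : Set (OnePoint ℚ)} (hK : IsCompact K) : IsClosed K := by
  by_cases hinf : (∞ : OnePoint ℚ) ∈ K
  · rw [OnePoint.isClosed_iff_of_mem hinf]
    refine IsSeqClosed.isClosed ?_
    intro u x hu hux
    set C : Set ℚ := insert x (Set.range u) with hC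
    have hCcomp : IsCompact C := hux.isCompact_insert_range
    have hCimcl : IsClosed (((↑) : ℚ → OnePoint ℚ) '' C) := by
      rw [OnePoint.isClosed_iff_of_notMem (by simp [OnePoint.infty_notMem_image_coe])]
      rw [Set.preimage_image_eq _ OnePoint.coe_injective]
      exact ⟨hCcomp.isClosed, hCcomp⟩
    have hKC : IsCompact (K ∩ (((↑) : ℚ → OnePoint ℚ) '' C)) := hK.inter_right hCimcl
    have him : ((↑) : ℚ → OnePoint ℚ) '' ((((↑) : ℚ → OnePoint ℚ) ⁻¹' K) ∩ C)
        = K ∩ (((↑) : ℚ → OnePoint ℚ) '' C) :=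
      Set.image_preimage_inter _ _ _
    have hAC : IsCompact ((((↑) : ℚ → OnePoint ℚ) ⁻¹' K) ∩ C) := by
      rw [OnePoint.isOpenEmbedding_coe.isEmbedding.isCompact_iff, him]
      exact hKC
    have hACcl : IsClosed ((((↑) : ℚ → OnePoint ℚ) ⁻¹' K) ∩ C) := hAC.isClosed
    have hxm : x ∈ (((↑) : ℚ → OnePoint ℚ) ⁻¹' K) ∩ C :=
      hACcl.mem_of_tendsto hux (Filter.Eventually.of_forall fun n => ⟨hu n, Or.inr ⟨n, rfl⟩⟩)
    exact hxm.1
  · rw [OnePoint.isClosed_iff_of_notMem hinf]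
    have hKsub : K ⊆ Set.range ((↑) : ℚ → OnePoint ℚ) := by
      intro y hy
      rcases y with _ | y
      · exact absurd hy hinf
      · exact ⟨y, rfl⟩
    have him : ((↑) : ℚ → OnePoint ℚ) '' ((((↑) : ℚ → OnePoint ℚ) ⁻¹' K)) = K :=
      Set.image_preimage_eq_of_subset hKsub
    have hA : IsCompact (((↑) : ℚ → OnePoint ℚ) ⁻¹' K) := by
      rw [OnePoint.isOpenEmbedding_coe.isEmbedding.isCompact_iff, him]; exact hK
    exact ⟨hA.isClosed, hA⟩

/-- `OnePoint ℚ` is not Hausdorff. -/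
theorem opcQ_not_t2 : ¬ T2Space (OnePoint ℚ) := by
  intro h
  have h1 : LocallyCompactSpace (OnePoint ℚ) := inferInstance
  have h2 : LocallyCompactSpace ℚ := OnePoint.isOpenEmbedding_coe.locallyCompactSpace
  obtain ⟨s, hs, hmem⟩ := exists_compact_mem_nhds (0 : ℚ)
  have h0 : (0 : ℚ) ∈ interior s := mem_interior_iff_mem_nhds.2 hmem
  rw [Rat.interior_compact_eq_empty hs] at h0
  exact h0

/-- The image of a normal space under a continuous closed surjection is normal. -/
theorem normalSpace_of_closed_surjection {Z Y : Type} [TopologicalSpace Z] [TopologicalSpace Y]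
    [NormalSpace Z] {f : Z → Y} (hc : Continuous f) (hsurj : Function.Surjective f)
    (hcl : IsClosedMap f) : NormalSpace Y := by
  constructor
  intro s t hs ht hst
  obtain ⟨U, V, hU, hV, hsU, htV, hUV⟩ :=
    normal_separation (hs.preimage hc) (ht.preimage hc) (hst.preimage f)
  refine ⟨(f '' Uᶜ)ᶜ, (f '' Vᶜ)ᶜ, (hcl _ hU.isClosed_compl).isOpen_compl,
    (hcl _ hV.isClosed_compl).isOpen_compl, ?_, ?_, ?_⟩
  · intro y hy hmem
    obtain ⟨z, hz, rfl⟩ := hmem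
    exact hz (hsU hy)
  · intro y hy hmem
    obtain ⟨z, hz, rfl⟩ := hmem
    exact hz (htV hy)
  · rw [Set.disjoint_left]
    intro y hy1 hy2
    obtain ⟨z, rfl⟩ := hsurj y
    simp only [Set.mem_compl_iff, Set.mem_image, not_exists, not_and] at hy1 hy2
    have hzU : z ∈ U := by by_contra hzU; exact hy1 z hzU rfl
    have hzV : z ∈ V := by by_contra hzV; exact hy2 z hzV rfl
    exact Set.disjoint_left.mp hUV hzU hzV

/-- `J` is the image of a compact Hausdorff space in `OnePoint ℚ`. -/
def CHImage (J : Set (OnePoint ℚ)) : Prop :=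
  ∃ (Z : Type) (_ : TopologicalSpace Z) (_ : CompactSpace Z) (_ : T2Space Z)
    (f : Z → OnePoint ℚ), Continuous f ∧ Set.range f = J

theorem CHImage.isClosed {J : Set (OnePoint ℚ)} (h : CHImage J) : IsClosed J := by
  obtain ⟨Z, _, _, _, f, hf, rfl⟩ := h
  exact opcQ_kc (isCompact_range hf)

theorem CHImage.union {J J' : Set (OnePoint ℚ)} (h : CHImage J) (h' : CHImage J') :
    CHImage (J ∪ J') := by
  obtain ⟨Z, _, _, _, f, hf, rfl⟩ := h
  obtain ⟨W, _, _, _, g, hg, rfl⟩ := h'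
  exact ⟨Z ⊕ W, inferInstance, inferInstance, inferInstance, Sum.elim f g,
    hf.sumElim hg, Sum.elim_range f g⟩

theorem CHImage.singleton (x : OnePoint ℚ) : CHImage {x} :=
  ⟨PUnit, inferInstance, inferInstance, inferInstance, fun _ => x,
    continuous_const, Set.range_const⟩

theorem CHImage.not_univ : ¬ CHImage (Set.univ : Set (OnePoint ℚ)) := by
  rintro ⟨Z, _, _, _, f, hf, hrange⟩
  have hsurj : Function.Surjective f := Set.range_eq_univ.mp hrange
  have hcl : IsClosedMap f := fun C hC => opcQ_kc ((hC.isCompact).image hf)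
  have hN : NormalSpace (OnePoint ℚ) := normalSpace_of_closed_surjection hf hsurj hcl
  have hT4 : T4Space (OnePoint ℚ) := ⟨⟩
  exact opcQ_not_t2 inferInstance

theorem CHImage.ne_univ {J : Set (OnePoint ℚ)} (h : CHImage J) : J ≠ Set.univ := by
  rintro rfl; exact CHImage.not_univ h

/-- The witness space: columns `ℕ × OnePoint ℚ` plus two extra points. -/
inductive Xc : Type
  | pt : ℕ → OnePoint ℚ → Xc
  | pp : Xc
  | qq : Xc

namespace Xc

/-- Open sets of the topology on `Xc`. -/
def IsOp (O : Set Xc) : Prop :=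
  (∀ n, IsOpen {x : OnePoint ℚ | Xc.pt n x ∈ O}) ∧
  (Xc.pp ∈ O → ∃ m, ∀ n, m ≤ n → ∀ x, Xc.pt n x ∈ O) ∧
  (Xc.qq ∈ O → ∃ m, ∃ J : ℕ → Set (OnePoint ℚ), (∀ n, CHImage (J n)) ∧
      ∀ n, m ≤ n → ∀ x, x ∉ J n → Xc.pt n x ∈ O)

instance : TopologicalSpace Xc where
  IsOpen := IsOp
  isOpen_univ := by
    refine ⟨fun n => isOpen_univ, fun _ => ⟨0, by simp⟩, fun _ => ⟨0, fun _ => {∞},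
      fun _ => CHImage.singleton _, by simp⟩⟩
  isOpen_inter := by
    rintro O O' ⟨ha, hb, hc⟩ ⟨ha', hb', hc'⟩
    refine ⟨fun n => (ha n).inter (ha' n), ?_, ?_⟩
    · rintro ⟨h1, h2⟩
      obtain ⟨m, hm⟩ := hb h1
      obtain ⟨m', hm'⟩ := hb' h2
      exact ⟨max m m', fun n hn x =>
        ⟨hm n (le_trans (le_max_left _ _) hn) x, hm' n (le_trans (le_max_right _ _) hn) x⟩⟩
    · rintro ⟨h1, h2⟩
      obtain ⟨m, J, hJ, hm⟩ := hc h1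
      obtain ⟨m', J', hJ', hm'⟩ := hc' h2
      refine ⟨max m m', fun n => J n ∪ J' n, fun n => (hJ n).union (hJ' n), ?_⟩
      intro n hn x hx
      exact ⟨hm n (le_trans (le_max_left _ _) hn) x (fun h => hx (Or.inl h)),
        hm' n (le_trans (le_max_right _ _) hn) x (fun h => hx (Or.inr h))⟩
  isOpen_sUnion := by
    intro S hS
    refine ⟨?_, ?_, ?_⟩
    · intro n
      have : {x : OnePoint ℚ | Xc.pt n x ∈ ⋃₀ S} = ⋃ O ∈ S, {x | Xc.pt n x ∈ O} := by
        ext x; simp [Set.mem_sUnion]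
      rw [this]
      exact isOpen_biUnion fun O hO => (hS O hO).1 n
    · rintro ⟨O, hO, hpO⟩
      obtain ⟨m, hm⟩ := (hS O hO).2.1 hpO
      exact ⟨m, fun n hn x => ⟨O, hO, hm n hn x⟩⟩
    · rintro ⟨O, hO, hqO⟩
      obtain ⟨m, J, hJ, hm⟩ := (hS O hO).2.2 hqO
      exact ⟨m, J, hJ, fun n hn x hx => ⟨O, hO, hm n hn x hx⟩⟩

theorem isOpen_iff {O : Set Xc} : IsOpen O ↔ IsOp O := Iff.rfl

/-- The `n`-th column. -/
def col (n : ℕ) : Set Xc := Set.range (Xc.pt n)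

theorem isOpen_col (n : ℕ) : IsOpen (col n) := by
  refine ⟨fun j => ?_, ?_, ?_⟩
  · by_cases hj : j = n
    · subst hj
      have : {x : OnePoint ℚ | Xc.pt j x ∈ col j} = Set.univ := by
        ext x; simp [col]
      rw [this]; exact isOpen_univ
    · have : {x : OnePoint ℚ | Xc.pt j x ∈ col n} = ∅ := by
        ext x
        simp only [col, Set.mem_range, Set.mem_setOf_eq, Set.mem_empty_iff_false, iff_false]
        rintro ⟨y, h⟩
        cases h
        exact hj rfl
      rw [this]; exact isOpen_empty
  · rintro ⟨y, h⟩; cases h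
  · rintro ⟨y, h⟩; cases h

theorem isClosed_col (n : ℕ) : IsClosed (col n) := by
  rw [← isOpen_compl_iff]
  refine ⟨fun j => ?_, ?_, ?_⟩
  · by_cases hj : j = n
    · subst hj
      have : {x : OnePoint ℚ | Xc.pt j x ∈ (col j)ᶜ} = ∅ := by
        ext x; simp [col]
      rw [this]; exact isOpen_empty
    · have : {x : OnePoint ℚ | Xc.pt j x ∈ (col n)ᶜ} = Set.univ := by
        ext x
        simp only [col, Set.mem_compl_iff, Set.mem_range, Set.mem_setOf_eq, Set.mem_univ,
          iff_true]
        rintro ⟨y, h⟩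
        cases h
        exact hj rfl
      rw [this]; exact isOpen_univ
  · intro _
    refine ⟨n + 1, fun k hk x => ?_⟩
    rintro ⟨y, h⟩
    cases h
    omega
  · intro _
    refine ⟨n + 1, fun _ => {∞}, fun _ => CHImage.singleton _, fun k hk x _ => ?_⟩
    rintro ⟨y, h⟩
    cases h
    omega

theorem continuous_pt (n : ℕ) : Continuous (Xc.pt n) := by
  rw [continuous_def]
  intro O hO
  exact hO.1 n

theorem isOpenMap_pt (n : ℕ) : IsOpenMap (Xc.pt n) := by
  intro V hV
  refine ⟨fun j => ?_, ?_, ?_⟩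
  · by_cases hj : j = n
    · subst hj
      have : {x : OnePoint ℚ | Xc.pt j x ∈ Xc.pt j '' V} = V := by
        ext x
        simp only [Set.mem_image, Set.mem_setOf_eq]
        constructor
        · rintro ⟨y, hy, h⟩; cases h; exact hy
        · exact fun hx => ⟨x, hx, rfl⟩
      rw [this]; exact hV
    · have : {x : OnePoint ℚ | Xc.pt j x ∈ Xc.pt n '' V} = ∅ := by
        ext x
        simp only [Set.mem_image, Set.mem_setOf_eq, Set.mem_empty_iff_false, iff_false]
        rintro ⟨y, _, h⟩
        cases h
        exact hj rfl
      rw [this]; exact isOpen_empty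
  · rintro ⟨y, _, h⟩; cases h
  · rintro ⟨y, _, h⟩; cases h

theorem injective_pt (n : ℕ) : Function.Injective (Xc.pt n) := by
  intro a b h; cases h; rfl

theorem isOpenEmbedding_pt (n : ℕ) : Topology.IsOpenEmbedding (Xc.pt n) :=
  Topology.IsOpenEmbedding.of_continuous_injective_isOpenMap
    (continuous_pt n) (injective_pt n) (isOpenMap_pt n)

theorem isCompact_col (n : ℕ) : IsCompact (col n) := by
  have : col n = Xc.pt n '' Set.univ := by rw [Set.image_univ]; rfl
  rw [this]
  exact CompactSpace.isCompact_univ.image (continuous_pt n)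

end Xc

namespace Xc

/-- Extract the `OnePoint ℚ` coordinate of a column point (junk value otherwise). -/
def unpt : Xc → OnePoint ℚ
  | Xc.pt _ x => x
  | Xc.pp => ∞
  | Xc.qq => ∞

theorem CHImage_slice {Z : Type} [TopologicalSpace Z] [CompactSpace Z] [T2Space Z]
    {f : Z → Xc} (hf : Continuous f) (n : ℕ) :
    CHImage {x : OnePoint ℚ | Xc.pt n x ∈ Set.range f} := by
  have hcl : IsClosed {z : Z | f z ∈ col n} := (isClosed_col n).preimage hf
  haveI : CompactSpace {z : Z // f z ∈ col n} :=
    isCompact_iff_compactSpace.mp hcl.isCompact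
  set g : {z : Z // f z ∈ col n} → OnePoint ℚ := fun z => unpt (f z.1) with hg
  have key : ∀ z : {z : Z // f z ∈ col n}, Xc.pt n (g z) = f z.1 := by
    rintro ⟨z, hz⟩
    obtain ⟨x, hx⟩ := hz
    simp only [hg, ← hx]
    rfl
  have hgc : Continuous g := by
    rw [(isOpenEmbedding_pt n).isEmbedding.continuous_iff]
    have : (Xc.pt n) ∘ g = f ∘ Subtype.val := funext fun z => key z
    rw [this]
    exact hf.comp continuous_subtype_val
  refine ⟨{z : Z // f z ∈ col n}, inferInstance, inferInstance, inferInstance, g, hgc, ?_⟩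
  ext x
  simp only [Set.mem_range, Set.mem_setOf_eq]
  constructor
  · rintro ⟨z, rfl⟩
    exact ⟨z.1, (key z).symm⟩
  · rintro ⟨z, hz⟩
    have hzc : f z ∈ col n := ⟨x, hz.symm⟩
    refine ⟨⟨z, hzc⟩, ?_⟩
    have := key ⟨z, hzc⟩
    rw [hz] at this
    exact injective_pt n this

/-- `Xc` is weakly Hausdorff: continuous images of compact Hausdorff spaces are closed. -/
theorem isClosed_range_of_CH {Z : Type} [TopologicalSpace Z] [CompactSpace Z] [T2Space Z]
    (f : Z → Xc) (hf : Continuous f) : IsClosed (Set.range f) := by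
  set R := Set.range f with hR
  set J : ℕ → Set (OnePoint ℚ) := fun n => {x | Xc.pt n x ∈ R} with hJ
  have hJCH : ∀ n, CHImage (J n) := fun n => CHImage_slice hf n
  have hJcl : ∀ n, IsClosed (J n) := fun n => (hJCH n).isClosed
  -- the canonical neighborhood of `qq` missing all column points of `R`
  set O : Set Xc := {y | match y with
    | Xc.pt n x => x ∉ J n
    | Xc.pp => False
    | Xc.qq => True} with hOdef
  have hOopen : IsOpen O := by
    refine ⟨fun n => ?_, fun h => h.elim, fun _ => ⟨0, J, hJCH, fun n _ x hx => hx⟩⟩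
    have : {x : OnePoint ℚ | Xc.pt n x ∈ O} = (J n)ᶜ := rfl
    rw [this]
    exact isOpen_compl_iff.mpr (hJcl n)
  have hOR : ∀ n x, Xc.pt n x ∈ R → Xc.pt n x ∉ O := by
    intro n x hmem hO
    exact hO hmem
  rw [← closure_subset_iff_isClosed]
  intro y hy
  match y with
  | Xc.pt n x₀ =>
    have hx₀ : x₀ ∈ closure (J n) := by
      rw [mem_closure_iff]
      intro V hV hxV
      obtain ⟨w, hwO, hwR⟩ := mem_closure_iff.mp hy (Xc.pt n '' V) (isOpenMap_pt n V hV)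
        ⟨x₀, hxV, rfl⟩
      obtain ⟨v, hv, rfl⟩ := hwO
      exact ⟨v, hv, hwR⟩
    rw [(hJcl n).closure_eq] at hx₀
    exact hx₀
  | Xc.qq =>
    by_contra hq
    obtain ⟨w, hwO, hwR⟩ := mem_closure_iff.mp hy O hOopen trivial
    match w with
    | Xc.pt n x => exact hOR n x hwR hwO
    | Xc.pp => exact hwO
    | Xc.qq => exact hq hwR
  | Xc.pp =>
    by_contra hp
    -- extract points of R in arbitrarily late columns
    have hseq : ∀ m : ℕ, ∃ n, m ≤ n ∧ ∃ x, Xc.pt n x ∈ R := by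
      intro m
      set B : Set Xc := {y | match y with
        | Xc.pt n _ => m ≤ n
        | Xc.pp => True
        | Xc.qq => False} with hBdef
      have hBopen : IsOpen B := by
        refine ⟨fun n => ?_, fun _ => ⟨m, fun n hn x => hn⟩, fun h => h.elim⟩
        by_cases hn : m ≤ n
        · have : {x : OnePoint ℚ | Xc.pt n x ∈ B} = Set.univ := by
            ext x; exact iff_of_true hn trivial
          rw [this]; exact isOpen_univ
        · have : {x : OnePoint ℚ | Xc.pt n x ∈ B} = ∅ := by
            ext x; exact iff_of_false hn (Set.notMem_empty x)
          rw [this]; exact isOpen_empty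
      obtain ⟨w, hwB, hwR⟩ := mem_closure_iff.mp hy B hBopen trivial
      match w with
      | Xc.pt n x => exact ⟨n, hwB, x, hwR⟩
      | Xc.pp => exact absurd hwR hp
      | Xc.qq => exact hwB.elim
    choose N hN xs hxs using hseq
    have hzex : ∀ m : ℕ, ∃ z : Z, f z = Xc.pt (N m) (xs m) := fun m => hxs m
    choose z hz using hzex
    haveI : Filter.NeBot (Filter.map z Filter.atTop) := Filter.map_neBot
    obtain ⟨c, -, hc⟩ := isCompact_univ.exists_clusterPt
      (f := Filter.map z Filter.atTop) (le_principal_iff.mpr Filter.univ_mem)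
    have hcc : ClusterPt (f c) (Filter.map (fun m => f (z m)) Filter.atTop) := by
      refine hc.map hf.continuousAt ?_
      rw [Filter.tendsto_iff_comap]
      rw [← Filter.map_le_iff_le_comap, Filter.map_map]
      exact le_of_eq rfl
    have hmeet : ∀ U ∈ 𝓝 (f c), ∀ V ∈ Filter.map (fun m => f (z m)) Filter.atTop,
        (U ∩ V).Nonempty := fun U hU V hV => (clusterPt_iff_nonempty.mp hcc) hU hV
    match hfc : f c with
    | Xc.pp => exact hp ⟨c, hfc⟩
    | Xc.qq =>
      have hUO : O ∈ 𝓝 (f c) := by rw [hfc]; exact hOopen.mem_nhds trivial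
      have hV : Set.range (fun m => f (z m)) ∈ Filter.map (fun m => f (z m)) Filter.atTop := by
        rw [← Set.image_univ]
        exact Filter.image_mem_map Filter.univ_mem
      obtain ⟨w, hwO, hwr⟩ := hmeet O hUO _ hV
      obtain ⟨m, rfl⟩ := hwr
      have hwO2 : f (z m) ∈ O := hwO
      rw [hz m] at hwO2
      exact hOR _ _ (by rw [← hz m]; exact ⟨z m, rfl⟩) hwO2
    | Xc.pt j y₀ =>
      have hUcol : col j ∈ 𝓝 (f c) := by
        rw [hfc]; exact (isOpen_col j).mem_nhds ⟨y₀, rfl⟩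
      have hV : (fun m => f (z m)) '' Set.Ici (j + 1) ∈
          Filter.map (fun m => f (z m)) Filter.atTop :=
        Filter.image_mem_map (Filter.mem_atTop (j + 1))
      obtain ⟨w, hwcol, hwim⟩ := hmeet _ hUcol _ hV
      obtain ⟨m, hm, rfl⟩ := hwim
      have hwc2 : f (z m) ∈ col j := hwcol
      rw [hz m] at hwc2
      obtain ⟨v, hv⟩ := hwc2
      cases hv
      have := hN m
      simp only [Set.mem_Ici] at hm
      omega

/-- The compact non-closed set: everything except `qq`. -/
theorem isCompact_compl_qq : IsCompact ({Xc.qq}ᶜ : Set Xc) := by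
  rw [isCompact_iff_finite_subcover]
  intro ι U hU hcov
  classical
  have hpmem : Xc.pp ∈ ⋃ i, U i := hcov (by simp)
  obtain ⟨i₀, hi₀⟩ := Set.mem_iUnion.mp hpmem
  obtain ⟨m, hm⟩ := (hU i₀).2.1 hi₀
  -- the first m columns are compact
  have hCm : IsCompact (⋃ n ∈ Finset.range m, col n) :=
    (Finset.range m).isCompact_biUnion (fun n _ => isCompact_col n)
  obtain ⟨t, ht⟩ := hCm.elim_finite_subcover U hU (fun y hy => hcov (by
    simp only [Set.mem_iUnion] at hy
    obtain ⟨n, _, x, rfl⟩ := hy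
    simp))
  refine ⟨insert i₀ t, ?_⟩
  intro y hy
  match y with
  | Xc.pp => exact Set.mem_biUnion (Finset.mem_insert_self i₀ t) hi₀
  | Xc.qq => exact absurd rfl hy
  | Xc.pt n x =>
    by_cases hn : m ≤ n
    · exact Set.mem_biUnion (Finset.mem_insert_self i₀ t) (hm n hn x)
    · have : Xc.pt n x ∈ ⋃ n ∈ Finset.range m, col n := by
        simp only [Set.mem_iUnion]
        exact ⟨n, Finset.mem_range.mpr (by omega), x, rfl⟩
      obtain ⟨i, hi, hmem⟩ := Set.mem_iUnion₂.mp (ht this)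
      exact Set.mem_biUnion (Finset.mem_insert_of_mem hi) hmem

theorem not_isClosed_compl_qq : ¬ IsClosed ({Xc.qq}ᶜ : Set Xc) := by
  intro h
  have hq : Xc.qq ∈ closure ({Xc.qq}ᶜ : Set Xc) := by
    rw [mem_closure_iff]
    intro O hO hqO
    obtain ⟨m, J, hJ, hm⟩ := hO.2.2 hqO
    have hne : J m ≠ Set.univ := (hJ m).ne_univ
    obtain ⟨x, hx⟩ : ∃ x, x ∉ J m := by
      by_contra hall
      push_neg at hall
      exact hne (Set.eq_univ_iff_forall.mpr hall)
    exact ⟨Xc.pt m x, hm m le_rfl x hx, by simp⟩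
  rw [h.closure_eq] at hq
  exact hq rfl

end Xc

end AuxConstruction

/-- There is a weakly Hausdorff space with a compact subset that is not closed. -/
theorem exists_weaklyHausdorff_not_kc :
    ∃ (X : Type) (_ : TopologicalSpace X), WeaklyHausdorff X ∧
      ∃ K : Set X, IsCompact K ∧ ¬ IsClosed K := by
  refine ⟨Xc, inferInstance, ?_, {Xc.qq}ᶜ, Xc.isCompact_compl_qq, Xc.not_isClosed_compl_qq⟩
  intro K _ _ _ f hf
  exact Xc.isClosed_range_of_CH f hf
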